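/- Let μ > 0, c ∈ ℝ, A ∈ ℝ, and work on a connected open interval I ⊂ ℝ where u + c > 0. Define γ_u^t(u) = μ + A/√(u+c) and γ^t(u) = μ(u+c) + 2A√(u+c) + A²/μ. Then (γ^t)'(u) = γ_u^t(u) on I, and −(u+c)(γ_u^t(u))² + μ γ^t(u) = 0 on I. -/

import Mathlib

/-- explicit solution family of the reduced standard z-independent
Hamilton–Jacobi equation for the dissipative Hunter–Saxton Hamiltonian. -/
theorem hunter_saxton_HJ_explicit_family
    (μ c A : ℝ) (hμ : 0 < μ)
    (I : Set ℝ) (hI : IsOpen I) (hconn : IsConnected I)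
    (hpos : ∀ u ∈ I, 0 < u + c) :
    let γut : ℝ → ℝ := fun u => μ + A / Real.sqrt (u + c)
    let γt : ℝ → ℝ := fun u => μ * (u + c) + 2 * A * Real.sqrt (u + c) + A ^ 2 / μ
    ∀ u ∈ I, deriv γt u = γut u ∧ -(u + c) * (γut u) ^ 2 + μ * γt u = 0 := by
  intro γut γt u hu
  have hpc : 0 < u + c := hpos u hu
  have hs : 0 < Real.sqrt (u + c) := Real.sqrt_pos.mpr hpc
  have hsq : Real.sqrt (u + c) ^ 2 = u + c := Real.sq_sqrt hpc.le
  constructor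
  · have h1 : HasDerivAt (fun u : ℝ => u + c) 1 u := (hasDerivAt_id u).add_const c
    have hsqrt : HasDerivAt (fun u : ℝ => Real.sqrt (u + c))
        (1 / (2 * Real.sqrt (u + c))) u := by
      have := (Real.hasDerivAt_sqrt hpc.ne').comp u h1
      simpa [Function.comp_def] using this
    have h : HasDerivAt γt (μ * 1 + 2 * A * (1 / (2 * Real.sqrt (u + c)))) u :=
      ((h1.const_mul μ).add (hsqrt.const_mul (2 * A))).add_const (A ^ 2 / μ)
    rw [h.deriv]
    show μ * 1 + 2 * A * (1 / (2 * Real.sqrt (u + c))) = μ + A / Real.sqrt (u + c)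
    field_simp
  · show -(u + c) * (μ + A / Real.sqrt (u + c)) ^ 2 +
      μ * (μ * (u + c) + 2 * A * Real.sqrt (u + c) + A ^ 2 / μ) = 0
    field_simp
    linear_combination (2 * μ * A * Real.sqrt (u + c) + A ^ 2) * hsq
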